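/- (Dissipation theorem.) In the linear contact model, let h : E × ℝ → ℝ be differentiable, let X be a differentiable contact Hamiltonian vector field of h, and let Y = (Y_E, Y_ℝ) : E × ℝ → E × ℝ be a differentiable vector field which is an infinitesimal dynamical symmetry, i.e. [X,Y] = 0: DY_p(X(p)) = DX_p(Y(p)) for all p. Then the function F(p) := −η_p(Y(p)) = λ(x)(Y_E(p)) − Y_ℝ(p) (for p = (x,s)) is a dissipated quantity: DF_p(X(p)) = −Dh_p(0,1)·F(p) for every p ∈ E × ℝ. -/

import Mathlib

/-- **Dissipation theorem.** In the linear contact model on `M = E × ℝ`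
with contact form `η_{(x,s)}(v,σ) = σ − λ(x)(v)` and Reeb vector field `R = (0,1)`, let
`X` be a differentiable contact Hamiltonian vector field of a differentiable
`h : E × ℝ → ℝ` and let `Y` be a differentiable infinitesimal dynamical symmetry
(`[X,Y] = 0`). Then `F(p) := −η_p(Y(p)) = λ(x)(Y_E(p)) − Y_ℝ(p)` is a dissipated
quantity: `DF_p(X(p)) = −Dh_p(0,1)·F(p)` for every `p`. -/
theorem contact_dissipation_theorem
    (E : Type*) [NormedAddCommGroup E] [NormedSpace ℝ E] [FiniteDimensional ℝ E]
    (lam : E →ₗ[ℝ] E →ₗ[ℝ] ℝ)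
    (hnd : ∀ u : E, (∀ v : E, lam v u - lam u v = 0) → u = 0)
    (h : E × ℝ → ℝ) (hh : Differentiable ℝ h)
    (X : E × ℝ → E × ℝ) (hXdiff : Differentiable ℝ X)
    (hX1 : ∀ p : E × ℝ, (X p).2 - lam p.1 (X p).1 = - h p)
    (hX2 : ∀ (p : E × ℝ) (v : E),
      lam v (X p).1 - lam (X p).1 v =
        fderiv ℝ h p (v, 0) + fderiv ℝ h p ((0, 1) : E × ℝ) * lam p.1 v)
    (Y : E × ℝ → E × ℝ) (hYdiff : Differentiable ℝ Y)
    (hcomm : ∀ p : E × ℝ, fderiv ℝ Y p (X p) = fderiv ℝ X p (Y p)) :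
    ∀ p : E × ℝ,
      fderiv ℝ (fun q => lam q.1 (Y q).1 - (Y q).2) p (X p) =
        -(fderiv ℝ h p ((0, 1) : E × ℝ)) * (lam p.1 (Y p).1 - (Y p).2) := by
  -- continuous bilinear version of lam
  let lam1 : E →ₗ[ℝ] (E →L[ℝ] ℝ) :=
    (LinearMap.toContinuousLinearMap : (E →ₗ[ℝ] ℝ) ≃ₗ[ℝ] (E →L[ℝ] ℝ)).toLinearMap.comp lam
  let L : E →L[ℝ] E →L[ℝ] ℝ := LinearMap.toContinuousLinearMap lam1
  have hL : ∀ u v : E, L u v = lam u v := by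
    intro u v
    simp [L, lam1]
  intro p
  have hY' : HasFDerivAt Y (fderiv ℝ Y p) p := (hYdiff p).hasFDerivAt
  have hX' : HasFDerivAt X (fderiv ℝ X p) p := (hXdiff p).hasFDerivAt
  have hh' : HasFDerivAt h (fderiv ℝ h p) p := (hh p).hasFDerivAt
  set DY := fderiv ℝ Y p with hDY
  set DX := fderiv ℝ X p with hDX
  set Dh := fderiv ℝ h p with hDh
  -- component derivatives
  have hfst : HasFDerivAt (fun q : E × ℝ => q.1) (ContinuousLinearMap.fst ℝ E ℝ) p :=
    hasFDerivAt_fst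
  have hY1 : HasFDerivAt (fun q => (Y q).1) ((ContinuousLinearMap.fst ℝ E ℝ).comp DY) p :=
    (ContinuousLinearMap.fst ℝ E ℝ).hasFDerivAt.comp p hY'
  have hY2 : HasFDerivAt (fun q => (Y q).2) ((ContinuousLinearMap.snd ℝ E ℝ).comp DY) p :=
    (ContinuousLinearMap.snd ℝ E ℝ).hasFDerivAt.comp p hY'
  have hX1' : HasFDerivAt (fun q => (X q).1) ((ContinuousLinearMap.fst ℝ E ℝ).comp DX) p :=
    (ContinuousLinearMap.fst ℝ E ℝ).hasFDerivAt.comp p hX'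
  have hX2' : HasFDerivAt (fun q => (X q).2) ((ContinuousLinearMap.snd ℝ E ℝ).comp DX) p :=
    (ContinuousLinearMap.snd ℝ E ℝ).hasFDerivAt.comp p hX'
  -- derivative of F
  have hBF : HasFDerivAt (fun q : E × ℝ => L q.1 (Y q).1)
      (L.precompR (E × ℝ) p.1 ((ContinuousLinearMap.fst ℝ E ℝ).comp DY)
        + L.precompL (E × ℝ) (ContinuousLinearMap.fst ℝ E ℝ) (Y p).1) p :=
    L.hasFDerivAt_of_bilinear hfst hY1
  have hF : HasFDerivAt (fun q : E × ℝ => lam q.1 (Y q).1 - (Y q).2)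
      ((L.precompR (E × ℝ) p.1 ((ContinuousLinearMap.fst ℝ E ℝ).comp DY)
        + L.precompL (E × ℝ) (ContinuousLinearMap.fst ℝ E ℝ) (Y p).1)
        - (ContinuousLinearMap.snd ℝ E ℝ).comp DY) p := by
    have := hBF.sub hY2
    exact this.congr_of_eventuallyEq (Filter.Eventually.of_forall fun q => by simp [hL])
  have eqF : fderiv ℝ (fun q => lam q.1 (Y q).1 - (Y q).2) p (X p) =
      lam p.1 (DY (X p)).1 + lam (X p).1 (Y p).1 - (DY (X p)).2 := by
    rw [hF.fderiv]
    simp [ContinuousLinearMap.precompR, ContinuousLinearMap.precompL, hL]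
  -- differentiate hX1
  have hG : HasFDerivAt (fun q : E × ℝ => (X q).2 - lam q.1 (X q).1 + h q)
      (((ContinuousLinearMap.snd ℝ E ℝ).comp DX
        - (L.precompR (E × ℝ) p.1 ((ContinuousLinearMap.fst ℝ E ℝ).comp DX)
          + L.precompL (E × ℝ) (ContinuousLinearMap.fst ℝ E ℝ) (X p).1)) + Dh) p := by
    have hBG := L.hasFDerivAt_of_bilinear hfst hX1'
    have := (hX2'.sub hBG).add hh'
    exact this.congr_of_eventuallyEq (Filter.Eventually.of_forall fun q => by simp [hL])
  have hG0 : (fun q : E × ℝ => (X q).2 - lam q.1 (X q).1 + h q) = fun _ => (0 : ℝ) := by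
    funext q
    have := hX1 q
    linarith
  have hGz : fderiv ℝ (fun q : E × ℝ => (X q).2 - lam q.1 (X q).1 + h q) p = 0 := by
    rw [hG0]; exact fderiv_const_apply 0
  have key : (DX (Y p)).2 - (lam p.1 (DX (Y p)).1 + lam (Y p).1 (X p).1) + Dh (Y p) = 0 := by
    have := hG.fderiv
    rw [hGz] at this
    have h2 := congrArg (fun T : (E × ℝ) →L[ℝ] ℝ => T (Y p)) this.symm
    simpa [ContinuousLinearMap.precompR, ContinuousLinearMap.precompL, hL] using h2
  -- decompose Dh (Y p)
  have hdec : Dh (Y p) = Dh ((Y p).1, 0) + (Y p).2 * Dh ((0,1) : E × ℝ) := by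
    have : (Y p) = ((Y p).1, (0:ℝ)) + (Y p).2 • ((0,1) : E × ℝ) := by
      ext <;> simp
    rw [this, map_add, map_smul]
    simp [smul_eq_mul]
  have h2 := hX2 p (Y p).1
  rw [eqF, hcomm p]
  rw [hdec] at key
  linarith [key, h2]
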